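/- Let W = S_n with string decomposition w = w_{n−1} ⋯ w_1, and let J be a subset of the simple roots. Then w is the minimal-length representative of its coset wW_J if and only if ℓ(w_i) ≤ ℓ(w_{i−1}) for every index i with α_i ∈ J (with the convention ℓ(w_0) = 0). -/

import Mathlib

/-- Simple reflection `s_i` in `S_{n+1}` (type `A_n`), swapping positions `i` and `i+1`. -/
def sgen {n : ℕ} (i : Fin n) : Equiv.Perm (Fin (n + 1)) :=
  Equiv.swap i.castSucc i.succ

/-- Action of a permutation on a root `ε_{p.1} - ε_{p.2}` of type `A`. -/
def actRoot {n : ℕ} (w : Equiv.Perm (Fin n)) (p : Fin n × Fin n) : Fin n × Fin n :=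
  (w p.1, w p.2)

/-- The root `ε_{p.1} - ε_{p.2}` is positive. -/
def IsPosRoot {n : ℕ} (p : Fin n × Fin n) : Prop := p.1 < p.2

/-- The root `ε_{p.1} - ε_{p.2}` is negative. -/
def IsNegRoot {n : ℕ} (p : Fin n × Fin n) : Prop := p.2 < p.1

/-- Inversion set `N(w) = {γ ∈ Φ⁺ : w(γ) ∈ Φ⁻}`. -/
def invSet {n : ℕ} (w : Equiv.Perm (Fin n)) : Set (Fin n × Fin n) :=
  {p | IsPosRoot p ∧ IsNegRoot (actRoot w p)}

/-- Bruhat length = number of inversions. -/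
def len {n : ℕ} (w : Equiv.Perm (Fin n)) : ℕ :=
  (Finset.univ.filter fun p : Fin n × Fin n => p.1 < p.2 ∧ w p.2 < w p.1).card

/-- The parabolic subgroup `W_J` generated by the simple reflections indexed by `J`. -/
def WJ {n : ℕ} (J : Set (Fin n)) : Subgroup (Equiv.Perm (Fin (n + 1))) :=
  Subgroup.closure (sgen '' J)

/-- Membership in the sub-root-system `Φ_J` spanned by the simple roots indexed by `J`:
all simple roots in the support of the root lie in `J`. -/
def InPhiJ {n : ℕ} (J : Set (Fin n)) (p : Fin (n + 1) × Fin (n + 1)) : Prop :=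
  p.1 ≠ p.2 ∧ ∀ k : Fin n, min p.1 p.2 ≤ k.castSucc → k.succ ≤ max p.1 p.2 → k ∈ J

/-- `v` is the minimal-length representative of its coset `vW_J`. -/
def IsMinRep {n : ℕ} (J : Set (Fin n)) (v : Equiv.Perm (Fin (n + 1))) : Prop :=
  ∀ y ∈ WJ J, len v ≤ len (v * y)

/-- The simple reflection `s_j` (`0`-indexed) in `S_{n+1}`, or the identity if
`j` is out of range. -/
def sN {n : ℕ} (j : ℕ) : Equiv.Perm (Fin (n + 1)) :=
  if h : j + 1 ≤ n then
    Equiv.swap ⟨j, by omega⟩ ⟨j + 1, by omega⟩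
  else 1

/-- The string `w_i = s_{i+1-ℓ} s_{i+2-ℓ} ⋯ s_i` of length `ℓ` ending at the simple
reflection `s_i` (the identity when `ℓ = 0`). -/
def wstring {n : ℕ} (i ℓ : ℕ) : Equiv.Perm (Fin (n + 1)) :=
  ((List.range' (i + 1 - ℓ) ℓ).map (sN (n := n))).prod

/-- The product `w_{n-1} w_{n-2} ⋯ w_1 w_0` of the strings encoded by the length
function `f` (`f i = ℓ(w_i)`). -/
def strProd {n : ℕ} (f : Fin n → ℕ) : Equiv.Perm (Fin (n + 1)) :=
  ((List.finRange n).reverse.map fun i => wstring (n := n) i.val (f i)).prod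


lemma sN_val {n : ℕ} (j : ℕ) (hj : j + 1 ≤ n) (x : Fin (n+1)) :
    ((sN (n := n) j) x).val = if x.val = j then j + 1 else if x.val = j + 1 then j else x.val := by
  rw [sN, dif_pos hj, Equiv.swap_apply_def]
  split_ifs with h1 h2 h1' h2' <;>
    simp_all [Fin.ext_iff] <;> omega

lemma wstring_val {n : ℕ} (i ℓ : ℕ) (hi : i < n) (hl : ℓ ≤ i + 1) (x : Fin (n+1)) :
    ((wstring (n := n) i ℓ) x).val =
      if x.val ≤ i ∧ i + 1 ≤ x.val + ℓ then x.val + 1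
      else if x.val = i + 1 ∧ 0 < ℓ then i + 1 - ℓ
      else x.val := by
  induction ℓ with
  | zero =>
      simp only [wstring, List.range', List.map_nil, List.prod_nil, Equiv.Perm.coe_one, id_eq]
      split_ifs <;> omega
  | succ ℓ ih =>
      have hl' : ℓ ≤ i + 1 := by omega
      have hrw : wstring (n := n) i (ℓ+1) = sN (i - ℓ) * wstring (n := n) i ℓ := by
        rw [wstring, wstring]
        have h1 : i + 1 - (ℓ + 1) = i - ℓ := by omega
        have h2 : i + 1 - ℓ = (i - ℓ) + 1 := by omega
        rw [h1, List.range'_succ, List.map_cons, List.prod_cons, h2]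
      rw [hrw]
      have hj : (i - ℓ) + 1 ≤ n := by omega
      rw [Equiv.Perm.mul_apply, sN_val _ hj, ih hl']
      split_ifs <;> omega

def Dseg {n : ℕ} (g : ℕ → ℕ) (a k : ℕ) : Equiv.Perm (Fin (n + 1)) :=
  ((List.range' a k).reverse.map (fun j => wstring (n := n) j (g j))).prod

lemma Dseg_succ {n : ℕ} (g : ℕ → ℕ) (a k : ℕ) :
    Dseg (n := n) g a (k+1) = wstring (a + k) (g (a + k)) * Dseg g a k := by
  rw [Dseg, Dseg, List.range'_concat, List.reverse_append, List.map_append, List.prod_append]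
  simp

lemma Dseg_fix {n : ℕ} (g : ℕ → ℕ) (hg : ∀ j, g j ≤ j + 1) (a k : ℕ) (hk : a + k ≤ n)
    (x : Fin (n+1)) (hx : a + k < x.val) : Dseg (n := n) g a k x = x := by
  induction k with
  | zero => rfl
  | succ k ih =>
      rw [Dseg_succ, Equiv.Perm.mul_apply, ih (by omega) (by omega)]
      apply Fin.ext
      rw [wstring_val _ _ (by omega) (by have := hg (a+k); omega)]
      split_ifs <;> omega

lemma Dseg_mono {n : ℕ} (g : ℕ → ℕ) (hg : ∀ j, g j ≤ j + 1) (a k : ℕ) (hk : a + k ≤ n)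
    (x y : Fin (n+1)) (hxy : x.val < y.val) (hy : y.val ≤ a) :
    ((Dseg (n := n) g a k) x).val < ((Dseg (n := n) g a k) y).val ∧
      ((Dseg (n := n) g a k) y).val ≤ a + k := by
  induction k with
  | zero =>
      have hz : Dseg (n := n) g a 0 = 1 := rfl
      rw [hz]; exact ⟨hxy, by simpa using by omega⟩
  | succ k ih =>
      obtain ⟨h1, h2⟩ := ih (by omega)
      rw [Dseg_succ, Equiv.Perm.mul_apply, Equiv.Perm.mul_apply]
      rw [wstring_val _ _ (by omega) (by have := hg (a+k); omega),
        wstring_val _ _ (by omega) (by have := hg (a+k); omega)]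
      have := hg (a + k)
      split_ifs <;> omega

lemma Dtop {n : ℕ} (g : ℕ → ℕ) (hg : ∀ j, g j ≤ j + 1) (k : ℕ) (hk : k ≤ n) :
    ((Dseg (n := n) g 0 k) ⟨k, by omega⟩).val = k - (if k = 0 then 0 else g (k-1)) := by
  cases k with
  | zero => simp [Dseg]
  | succ k =>
      rw [Dseg_succ, Equiv.Perm.mul_apply, Nat.zero_add]
      rw [Dseg_fix g hg 0 k (by omega) _ (by simp)]
      rw [wstring_val _ _ (by omega) (by have := hg k; omega)]
      have := hg k
      simp only [if_neg (Nat.succ_ne_zero k), Nat.add_sub_cancel]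
      split_ifs with h1 h2
      · omega
      · omega
      · rcases Nat.eq_zero_or_pos (g k) with h | h
        · omega
        · exact absurd ⟨trivial, h⟩ h2

lemma strProd_eq {n : ℕ} (f : Fin n → ℕ) :
    strProd f = ((List.range n).reverse.map
      (fun j => wstring (n := n) j (if h : j < n then f ⟨j, h⟩ else 0))).prod := by
  rw [strProd, ← List.map_coe_finRange_eq_range, ← List.map_reverse, List.map_map]
  congr 1
  apply List.map_congr_left
  intro i _
  simp [Function.comp, dif_pos i.isLt]

lemma strProd_decomp {n : ℕ} (f : Fin n → ℕ) (i : ℕ) (hi : i < n) :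
    strProd f = Dseg (n := n) (fun j => if h : j < n then f ⟨j, h⟩ else 0) (i+1) (n-(i+1)) *
      Dseg (n := n) (fun j => if h : j < n then f ⟨j, h⟩ else 0) 0 (i+1) := by
  rw [strProd_eq, Dseg, Dseg]
  have hsplit : List.range n = List.range' 0 (i+1) ++ List.range' (i+1) (n-(i+1)) := by
    have h := List.range'_append (s := 0) (m := i+1) (n := n-(i+1)) (step := 1)
    simp only [Nat.one_mul, Nat.zero_add] at h
    have h2 : List.range' 0 n = List.range' 0 ((i+1)+(n-(i+1))) := by congr 1; omega
    rw [List.range_eq_range', h2, ← h]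
  rw [hsplit, List.reverse_append, List.map_append, List.prod_append]

lemma partB {n : ℕ} (f : Fin n → ℕ) (hf : ∀ i, f i ≤ i.val + 1) (i : Fin n) :
    strProd f i.castSucc < strProd f i.succ ↔
      f i ≤ (if h : 0 < i.val then
        f ⟨i.val - 1, Nat.lt_of_le_of_lt (Nat.sub_le _ _) i.isLt⟩ else 0) := by
  set g : ℕ → ℕ := fun j => if h : j < n then f ⟨j, h⟩ else 0 with hgdef
  have hg : ∀ j, g j ≤ j + 1 := by
    intro j
    show (if h : j < n then f ⟨j, h⟩ else 0) ≤ j + 1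
    split
    · exact hf _
    · omega
  have hgi : g i.val = f i := by
    show (if h : i.val < n then f ⟨i.val, h⟩ else 0) = f i
    rw [dif_pos i.isLt]
  set prev : ℕ := if i.val = 0 then 0 else g (i.val - 1) with hprev
  have hrhs : (if h : 0 < i.val then
      f ⟨i.val - 1, Nat.lt_of_le_of_lt (Nat.sub_le _ _) i.isLt⟩ else 0) = prev := by
    rcases Nat.eq_zero_or_pos i.val with h | h
    · rw [hprev, if_pos h, dif_neg (by omega)]
    · rw [hprev, if_neg (by omega), dif_pos h]
      show _ = if h' : i.val - 1 < n then f ⟨i.val - 1, h'⟩ else 0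
      rw [dif_pos (by omega)]
  rw [hrhs]
  have hprev_le : prev ≤ i.val := by
    rw [hprev]; split
    · omega
    · have := hg (i.val - 1); omega
  -- value of D at i.castSucc
  have hD := Dseg_succ (n := n) g 0 i.val
  rw [Nat.zero_add] at hD
  have hcs : (i.castSucc : Fin (n+1)) = ⟨i.val, by omega⟩ := rfl
  have hAin : ((Dseg (n := n) g 0 i.val) ⟨i.val, by omega⟩).val = i.val - prev := by
    rw [Dtop g hg i.val (by omega), hprev]
  have hA : ((Dseg (n := n) g 0 (i.val+1)) i.castSucc).val =
      if i.val + 1 ≤ i.val - prev + g i.val then i.val - prev + 1 else i.val - prev := by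
    rw [hcs, hD, Equiv.Perm.mul_apply]
    rw [wstring_val _ _ i.isLt (by have := hg i.val; omega)]
    rw [hAin]
    split_ifs <;> omega
  have hsc : (i.succ : Fin (n+1)) = ⟨i.val + 1, by omega⟩ := rfl
  have hB : ((Dseg (n := n) g 0 (i.val+1)) i.succ).val = i.val + 1 - g i.val := by
    rw [hsc, Dtop g hg (i.val+1) (by omega)]
    simp
  -- now compose with the tail
  have hw := strProd_decomp f i.val i.isLt
  rw [← hgdef] at hw
  have hfig := hg i.val
  constructor
  · intro hlt
    by_contra hcon
    push_neg at hcon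
    rw [hgi] at hA hB
    -- then D i.succ < D i.castSucc
    have h1 : ((Dseg (n := n) g 0 (i.val+1)) i.succ).val <
        ((Dseg (n := n) g 0 (i.val+1)) i.castSucc).val := by
      rw [hA, hB]; split_ifs <;> omega
    have h2 : ((Dseg (n := n) g 0 (i.val+1)) i.castSucc).val ≤ i.val + 1 := by
      rw [hA]; split_ifs <;> omega
    have := Dseg_mono g hg (i.val+1) (n-(i.val+1)) (by omega) _ _ h1 h2
    rw [hw] at hlt
    rw [Fin.lt_def] at hlt
    simp only [Equiv.Perm.mul_apply] at hlt
    omega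
  · intro hle
    rw [hgi] at hA hB
    have h1 : ((Dseg (n := n) g 0 (i.val+1)) i.castSucc).val <
        ((Dseg (n := n) g 0 (i.val+1)) i.succ).val := by
      rw [hA, hB]; split_ifs <;> omega
    have h2 : ((Dseg (n := n) g 0 (i.val+1)) i.succ).val ≤ i.val + 1 := by
      rw [hB]; omega
    have := Dseg_mono g hg (i.val+1) (n-(i.val+1)) (by omega) _ _ h1 h2
    rw [hw, Fin.lt_def]
    simp only [Equiv.Perm.mul_apply]
    omega

lemma swap_adj_val {n : ℕ} (i : Fin n) (x : Fin (n+1)) :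
    ((Equiv.swap i.castSucc i.succ) x).val =
      if x.val = i.val then i.val + 1 else if x.val = i.val + 1 then i.val else x.val := by
  rw [Equiv.swap_apply_def]
  split_ifs with h1 h2 h1' h2' <;> simp_all [Fin.ext_iff] <;> omega

lemma len_mul_sgen_lt {n : ℕ} (w : Equiv.Perm (Fin (n+1))) (i : Fin n)
    (h : w i.succ < w i.castSucc) : len (w * sgen i) < len w := by
  classical
  set s := Equiv.swap i.castSucc i.succ with hs
  set F := fun u : Equiv.Perm (Fin (n+1)) =>
    (Finset.univ.filter fun p : Fin (n+1) × Fin (n+1) => p.1 < p.2 ∧ u p.2 < u p.1) with hF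
  have hmem : (i.castSucc, i.succ) ∈ F w := by
    simp only [hF, Finset.mem_filter, Finset.mem_univ, true_and]
    exact ⟨by simp [Fin.lt_def], h⟩
  have hcard : (F (w * sgen i)).card ≤ ((F w).erase (i.castSucc, i.succ)).card := by
    apply Finset.card_le_card_of_injOn (fun p => (s p.1, s p.2))
    · intro p hp
      simp only [hF, Finset.mem_coe, Finset.mem_filter, Finset.mem_univ, true_and] at hp
      obtain ⟨hlt, hinv⟩ := hp
      have e1 := swap_adj_val i p.1
      have e2 := swap_adj_val i p.2
      have hpne : ¬(p.1 = i.castSucc ∧ p.2 = i.succ) := by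
        rintro ⟨h1, h2⟩
        rw [h1, h2] at hinv
        have c1 : (w * sgen i) i.succ = w i.castSucc := by
          show w (s i.succ) = w i.castSucc
          rw [hs, Equiv.swap_apply_right]
        have c2 : (w * sgen i) i.castSucc = w i.succ := by
          show w (s i.castSucc) = w i.succ
          rw [hs, Equiv.swap_apply_left]
        rw [c1, c2] at hinv
        exact absurd hinv (lt_asymm h)
      rw [Finset.mem_coe, Finset.mem_erase]
      constructor
      · intro hcon
        have h1 : s p.1 = i.castSucc := congrArg Prod.fst hcon
        have h2 : s p.2 = i.succ := congrArg Prod.snd hcon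
        rw [← h1, ← h2] at hcon
        have hp1 : p.1 = i.succ := by
          have := congrArg s h1
          simpa [hs, Equiv.swap_apply_left] using this
        have hp2 : p.2 = i.castSucc := by
          have := congrArg s h2
          simpa [hs, Equiv.swap_apply_right] using this
        rw [Fin.lt_def, hp1, hp2] at hlt
        simp at hlt
      · simp only [hF, Finset.mem_filter, Finset.mem_univ, true_and]
        constructor
        · rw [Fin.lt_def] at hlt ⊢
          rw [← hs] at e1 e2
          by_cases hb : p.1.val = i.val ∧ p.2.val = i.val + 1
          · exact absurd ⟨Fin.ext hb.1, Fin.ext hb.2⟩ hpne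
          · rcases not_and_or.mp hb with hb' | hb' <;>
              split_ifs at e1 e2 <;> omega
        · have : (w * sgen i) p.2 = w (s p.2) := rfl
          have h2 : (w * sgen i) p.1 = w (s p.1) := rfl
          rw [this, h2] at hinv
          exact hinv
    · intro p _ q _ hpq
      have h1 : s p.1 = s q.1 := congrArg Prod.fst hpq
      have h2 : s p.2 = s q.2 := congrArg Prod.snd hpq
      exact Prod.ext (s.injective h1) (s.injective h2)
  have hne : 0 < (F w).card := Finset.card_pos.mpr ⟨_, hmem⟩
  rw [Finset.card_erase_of_mem hmem] at hcard
  show (F (w * sgen i)).card < (F w).card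
  omega

def SameB {n : ℕ} (J : Set (Fin n)) (x z : Fin (n+1)) : Prop :=
  ∀ k : Fin n, min x.val z.val ≤ k.val → k.val + 1 ≤ max x.val z.val → k ∈ J

lemma SameB_self {n : ℕ} (J : Set (Fin n)) (x : Fin (n+1)) : SameB J x x := by
  intro k h1 h2; omega

lemma SameB_symm {n : ℕ} {J : Set (Fin n)} {x z : Fin (n+1)} (h : SameB J x z) :
    SameB J z x := by
  intro k h1 h2; exact h k (by omega) (by omega)

lemma SameB_trans {n : ℕ} {J : Set (Fin n)} {x y z : Fin (n+1)}
    (h1 : SameB J x y) (h2 : SameB J y z) : SameB J x z := by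
  intro k hk1 hk2
  rcases le_or_gt (k.val + 1) (max x.val y.val) with h | h
  · rcases le_or_gt (min x.val y.val) k.val with h' | h'
    · exact h1 k h' h
    · exact h2 k (by omega) (by omega)
  · exact h2 k (by omega) (by omega)

lemma WJ_same {n : ℕ} {J : Set (Fin n)} {y : Equiv.Perm (Fin (n+1))} (hy : y ∈ WJ J) :
    ∀ x, SameB J x (y x) := by
  induction hy using Subgroup.closure_induction with
  | mem g hg =>
      obtain ⟨k, hkJ, rfl⟩ := hg
      intro x
      rcases eq_or_ne x k.castSucc with rfl | h1
      · rw [sgen, Equiv.swap_apply_left]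
        intro k' hm1 hm2
        have hv1 : (Fin.castSucc k).val = k.val := rfl
        have hv2 : (Fin.succ k).val = k.val + 1 := rfl
        have : k' = k := Fin.ext (by omega)
        rwa [this]
      · rcases eq_or_ne x k.succ with rfl | h2
        · rw [sgen, Equiv.swap_apply_right]
          intro k' hm1 hm2
          have hv1 : (Fin.castSucc k).val = k.val := rfl
          have hv2 : (Fin.succ k).val = k.val + 1 := rfl
          have : k' = k := Fin.ext (by omega)
          rwa [this]
        · rw [sgen, Equiv.swap_apply_of_ne_of_ne h1 h2]
          exact SameB_self J x
  | one => intro x; simpa using SameB_self J x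
  | mul g h _ _ ihg ihh =>
      intro x
      have h1 : SameB J x (h x) := ihh x
      have h2 : SameB J (h x) (g (h x)) := ihg (h x)
      simpa using SameB_trans h1 h2
  | inv g _ ihg =>
      intro x
      have := ihg (g⁻¹ x)
      rw [Equiv.Perm.inv_def, Equiv.apply_symm_apply] at this
      exact SameB_symm this

lemma SameB_interval {n : ℕ} {J : Set (Fin n)} {a b a' b' : Fin (n+1)}
    (hab : a.val < b.val) (hnot : ¬ SameB J a b)
    (ha : SameB J a a') (hb : SameB J b b') : a'.val < b'.val := by
  rw [SameB] at hnot
  push_neg at hnot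
  obtain ⟨k, hk1, hk2, hkJ⟩ := hnot
  have ha' : a'.val ≤ k.val := by
    by_contra hcon
    exact hkJ (ha k (by omega) (by omega))
  have hb' : k.val + 1 ≤ b'.val := by
    by_contra hcon
    exact hkJ (hb k (by omega) (by omega))
  omega

lemma incr_on_block {n : ℕ} {J : Set (Fin n)} {w : Equiv.Perm (Fin (n+1))}
    (hinc : ∀ i ∈ J, w i.castSucc < w i.succ) :
    ∀ a b : Fin (n+1), a.val < b.val → SameB J a b → w a < w b := by
  have step : ∀ a b : Fin (n+1), b.val = a.val + 1 → SameB J a b → w a < w b := by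
    intro a b hb hs
    have hk : a.val < n := by omega
    set k : Fin n := ⟨a.val, hk⟩ with hkdef
    have hkv : k.val = a.val := rfl
    have hkJ : k ∈ J := hs k (by omega) (by omega)
    have ha : a = k.castSucc := Fin.ext rfl
    have hbq : b = k.succ := Fin.ext (by show b.val = k.val + 1; omega)
    rw [ha, hbq]
    exact hinc k hkJ
  have key : ∀ d (a b : Fin (n+1)), b.val = a.val + d + 1 → SameB J a b → w a < w b := by
    intro d
    induction d with
    | zero => intro a b hb hs; exact step a b (by omega) hs
    | succ d ih =>
        intro a b hb hs
        set c : Fin (n+1) := ⟨a.val + d + 1, by omega⟩ with hcdef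
        have hcv : c.val = a.val + d + 1 := rfl
        have h1 : w a < w c := by
          apply ih a c (by omega)
          intro k hk1 hk2
          exact hs k (by omega) (by omega)
        have h2 : w c < w b := by
          apply step c b (by omega)
          intro k hk1 hk2
          exact hs k (by omega) (by omega)
        exact lt_trans h1 h2
  intro a b hab hs
  exact key (b.val - a.val - 1) a b (by omega) hs

lemma len_le_of_asc {n : ℕ} {J : Set (Fin n)} {w : Equiv.Perm (Fin (n+1))}
    (hinc : ∀ i ∈ J, w i.castSucc < w i.succ) :
    ∀ y ∈ WJ J, len w ≤ len (w * y) := by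
  intro y hy
  apply Finset.card_le_card_of_injOn (fun p => (y⁻¹ p.1, y⁻¹ p.2))
  · intro p hp
    simp only [Finset.mem_coe, Finset.mem_filter, Finset.mem_univ, true_and] at hp ⊢
    obtain ⟨hlt, hinv⟩ := hp
    have hnot : ¬ SameB J p.1 p.2 := by
      intro hcon
      exact absurd (incr_on_block hinc p.1 p.2 (Fin.lt_def.mp hlt) hcon) (lt_asymm hinv)
    have h1 : SameB J p.1 (y⁻¹ p.1) := by
      have := WJ_same hy (y⁻¹ p.1)
      rw [Equiv.Perm.inv_def, Equiv.apply_symm_apply] at this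
      exact SameB_symm this
    have h2 : SameB J p.2 (y⁻¹ p.2) := by
      have := WJ_same hy (y⁻¹ p.2)
      rw [Equiv.Perm.inv_def, Equiv.apply_symm_apply] at this
      exact SameB_symm this
    constructor
    · exact Fin.lt_def.mpr (SameB_interval (Fin.lt_def.mp hlt) hnot h1 h2)
    · show w (y (y⁻¹ p.2)) < w (y (y⁻¹ p.1))
      rw [Equiv.Perm.inv_def, Equiv.apply_symm_apply, Equiv.apply_symm_apply]
      exact hinv
  · intro p _ q _ hpq
    have h1 := congrArg Prod.fst hpq
    have h2 := congrArg Prod.snd hpq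
    exact Prod.ext (y⁻¹.injective h1) (y⁻¹.injective h2)

/-- with `w = w_{n-1} ⋯ w_0` the string decomposition of `w` (where
`f i = ℓ(w_i)`) and `J` a set of simple roots, `w` is the minimal-length
representative of `wW_J` iff `ℓ(w_i) ≤ ℓ(w_{i-1})` for every `i` with `α_i ∈ J`
(with the convention `ℓ(w_{-1}) = 0`). -/
theorem statement12 {n : ℕ} (J : Set (Fin n)) (w : Equiv.Perm (Fin (n + 1)))
    (f : Fin n → ℕ) (hf : ∀ i, f i ≤ i.val + 1) (hw : w = strProd f) :
    IsMinRep J w ↔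
      ∀ i : Fin n, i ∈ J →
        f i ≤ (if h : 0 < i.val then
          f ⟨i.val - 1, Nat.lt_of_le_of_lt (Nat.sub_le _ _) i.isLt⟩ else 0) := by
  subst hw
  constructor
  · intro hmin i hiJ
    have hgen : sgen i ∈ WJ J := Subgroup.subset_closure ⟨i, hiJ, rfl⟩
    have hle := hmin (sgen i) hgen
    rcases lt_trichotomy (strProd f i.castSucc) (strProd f i.succ) with h | h | h
    · exact (partB f hf i).mp h
    · exact absurd ((strProd f).injective h) (Fin.castSucc_lt_succ (i := i)).ne
    · exact absurd hle (not_le.mpr (len_mul_sgen_lt (strProd f) i h))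
  · intro hcond y hy
    exact len_le_of_asc (fun i hi => (partB f hf i).mpr (hcond i hi)) y hy
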